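/- Fix t > 0. Let V : [0,t] × ℝ → ℝ be continuously differentiable with derivative V_x in the second variable, and let φ : ℝ → ℝ be continuously differentiable. Let ψ : [0,t] × ℝ → ℝ be twice continuously differentiable (jointly in (s,x)) and satisfy, for all s ∈ [0,t] and x ∈ ℝ: ψ_ss(s,x) = V_x(s, ψ(s,x)), ψ(t,x) = x, and ψ_s(0,x) = φ'(ψ(0,x)). Define F(x) = φ(ψ(0,x)) + ∫_0^t ( ½·ψ_s(s,x)² + V(s, ψ(s,x)) ) ds. Then F is differentiable and F'(x) = ψ_s(t,x) for every x ∈ ℝ. -/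

import Mathlib

open MeasureTheory intervalIntegral

/-- **Derivative of the value function along a family of Euler–Lagrange trajectories.**
If `ψ(s,x)` is a `C²` family of solutions of `ψ_ss = V_x(s,ψ)` with `ψ(t,x) = x` and
`ψ_s(0,x) = φ'(ψ(0,x))`, then the value function
`F(x) = φ(ψ(0,x)) + ∫₀ᵗ (½ ψ_s(s,x)² + V(s,ψ(s,x))) ds` is differentiable with
`F'(x) = ψ_s(t,x)`. -/
theorem deriv_value_function_eq_velocity (t : ℝ) (ht : 0 < t)
    (V : ℝ → ℝ → ℝ) (hV : ContDiff ℝ 1 fun p : ℝ × ℝ => V p.1 p.2)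
    (Vx : ℝ → ℝ → ℝ) (hVx : ∀ s y, HasDerivAt (V s) (Vx s y) y)
    (φ : ℝ → ℝ) (hφ : ContDiff ℝ 1 φ)
    (ψ : ℝ → ℝ → ℝ) (hψ : ContDiff ℝ 2 fun p : ℝ × ℝ => ψ p.1 p.2)
    (hEL : ∀ s ∈ Set.Icc (0:ℝ) t, ∀ x : ℝ,
      deriv (fun r => deriv (fun r' => ψ r' x) r) s = Vx s (ψ s x))
    (hterm : ∀ x : ℝ, ψ t x = x)
    (hinit : ∀ x : ℝ, deriv (fun r => ψ r x) 0 = deriv φ (ψ 0 x))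
    (F : ℝ → ℝ)
    (hF : ∀ x, F x = φ (ψ 0 x)
        + ∫ s in (0:ℝ)..t, ((1 / 2) * (deriv (fun r => ψ r x) s) ^ 2 + V s (ψ s x))) :
    ∀ x : ℝ, HasDerivAt F (deriv (fun r => ψ r x) t) x := by
  intro x₀
  set Ψ : ℝ × ℝ → ℝ := fun p => ψ p.1 p.2 with hΨdef
  have hΨd : Differentiable ℝ Ψ := hψ.differentiable (by norm_num)
  have hD : ContDiff ℝ 1 (fderiv ℝ Ψ) := hψ.fderiv_right (by norm_num)
  have hDd : Differentiable ℝ (fderiv ℝ Ψ) := hD.differentiable (by norm_num)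
  set σ : ℝ × ℝ → ℝ := fun p => fderiv ℝ Ψ p (1, 0) with hσdef
  set ξ : ℝ × ℝ → ℝ := fun p => fderiv ℝ Ψ p (0, 1) with hξdef
  have hσ : ContDiff ℝ 1 σ := hD.clm_apply contDiff_const
  have hξ : ContDiff ℝ 1 ξ := hD.clm_apply contDiff_const
  -- partial derivatives of ψ
  have hcurve1 : ∀ x s : ℝ, HasDerivAt (fun r : ℝ => (r, x)) ((1:ℝ), (0:ℝ)) s := by
    intro x s
    exact (hasDerivAt_id s).prodMk (hasDerivAt_const s x)
  have hcurve2 : ∀ s x : ℝ, HasDerivAt (fun y : ℝ => (s, y)) ((0:ℝ), (1:ℝ)) x := by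
    intro s x
    exact (hasDerivAt_const x s).prodMk (hasDerivAt_id x)
  have hψs : ∀ s x : ℝ, HasDerivAt (fun r => ψ r x) (σ (s, x)) s := fun s x =>
    by have := (hΨd (s, x)).hasFDerivAt.comp_hasDerivAt s (hcurve1 x s); exact this
  have hψx : ∀ s x : ℝ, HasDerivAt (fun y => ψ s y) (ξ (s, x)) x := fun s x =>
    (hΨd (s, x)).hasFDerivAt.comp_hasDerivAt x (hcurve2 s x)
  have hderiv : ∀ s x : ℝ, deriv (fun r => ψ r x) s = σ (s, x) := fun s x => (hψs s x).deriv
  -- partials of σ and ξ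
  have hσd : Differentiable ℝ σ := hσ.differentiable (by norm_num)
  have hξd : Differentiable ℝ ξ := hξ.differentiable (by norm_num)
  have hσs : ∀ s x : ℝ, HasDerivAt (fun r => σ (r, x)) (fderiv ℝ σ (s, x) (1, 0)) s := fun s x =>
    by have := (hσd (s, x)).hasFDerivAt.comp_hasDerivAt s (hcurve1 x s); exact this
  have hσx : ∀ s x : ℝ, HasDerivAt (fun y => σ (s, y)) (fderiv ℝ σ (s, x) (0, 1)) x := fun s x =>
    (hσd (s, x)).hasFDerivAt.comp_hasDerivAt x (hcurve2 s x)
  have hξs : ∀ s x : ℝ, HasDerivAt (fun r => ξ (r, x)) (fderiv ℝ ξ (s, x) (1, 0)) s := fun s x =>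
    by have := (hξd (s, x)).hasFDerivAt.comp_hasDerivAt s (hcurve1 x s); exact this
  -- symmetry of second derivatives : ∂ₛ ξ = ∂ₓ σ
  have hmix : ∀ p : ℝ × ℝ, fderiv ℝ ξ p (1, 0) = fderiv ℝ σ p (0, 1) := by
    intro p
    have h2 : HasFDerivAt (fderiv ℝ Ψ) (fderiv ℝ (fderiv ℝ Ψ) p) p := (hDd p).hasFDerivAt
    have hsymm := second_derivative_symmetric (fun y => (hΨd y).hasFDerivAt) h2
      ((1:ℝ), (0:ℝ)) ((0:ℝ), (1:ℝ))
    have e1 : HasFDerivAt σ ((ContinuousLinearMap.apply ℝ ℝ ((1:ℝ), (0:ℝ))).comp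
        (fderiv ℝ (fderiv ℝ Ψ) p)) p :=
      (ContinuousLinearMap.apply ℝ ℝ ((1:ℝ), (0:ℝ))).hasFDerivAt.comp p h2
    have e2 : HasFDerivAt ξ ((ContinuousLinearMap.apply ℝ ℝ ((0:ℝ), (1:ℝ))).comp
        (fderiv ℝ (fderiv ℝ Ψ) p)) p :=
      (ContinuousLinearMap.apply ℝ ℝ ((0:ℝ), (1:ℝ))).hasFDerivAt.comp p h2
    rw [e1.fderiv, e2.fderiv]
    simpa using hsymm
  -- Euler–Lagrange in terms of σ
  have hELσ : ∀ s ∈ Set.Icc (0:ℝ) t, ∀ x : ℝ, fderiv ℝ σ (s, x) (1, 0) = Vx s (ψ s x) := by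
    intro s hs x
    have h1 : (fun r => deriv (fun r' => ψ r' x) r) = fun r => σ (r, x) := by
      funext r; exact hderiv r x
    have := hEL s hs x
    rw [h1] at this
    rw [← this, (hσs s x).deriv]
  -- terminal condition: ξ (t, x) = 1
  have hξt : ∀ x : ℝ, ξ (t, x) = 1 := by
    intro x
    have h := hψx t x
    have hid : (fun y => ψ t y) = fun y => y := funext hterm
    rw [hid] at h
    exact h.unique (hasDerivAt_id x)
  -- joint continuity of Vx
  have hVxσ : ∀ s y : ℝ, Vx s y = fderiv ℝ (fun p : ℝ × ℝ => V p.1 p.2) (s, y) (0, 1) := by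
    intro s y
    have hVd : Differentiable ℝ (fun p : ℝ × ℝ => V p.1 p.2) := hV.differentiable (by norm_num)
    have h : HasDerivAt (fun z => V s z) (fderiv ℝ (fun p : ℝ × ℝ => V p.1 p.2) (s, y) (0, 1)) y :=
      (hVd (s, y)).hasFDerivAt.comp_hasDerivAt y (hcurve2 s y)
    exact (hVx s y).unique h
  have hVxcont : Continuous fun p : ℝ × ℝ => Vx p.1 p.2 := by
    have : Continuous fun p : ℝ × ℝ =>
        fderiv ℝ (fun q : ℝ × ℝ => V q.1 q.2) p ((0:ℝ), (1:ℝ)) :=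
      ((hV.fderiv_right (m := 0) (by norm_num)).clm_apply contDiff_const).continuous
    exact this.congr fun p => by rw [hVxσ p.1 p.2]
  -- continuity of ∂ₓσ
  have hσxcont : Continuous fun p : ℝ × ℝ => fderiv ℝ σ p ((0:ℝ), (1:ℝ)) :=
    ((hσ.fderiv_right (m := 0) (by norm_num)).clm_apply contDiff_const).continuous
  -- the integrand derivative
  set G : ℝ × ℝ → ℝ := fun p =>
    σ p * fderiv ℝ σ p (0, 1) + Vx p.1 (ψ p.1 p.2) * ξ p with hGdef
  have hGcont : Continuous G := by
    apply Continuous.add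
    · exact hσ.continuous.mul hσxcont
    · exact (hVxcont.comp (continuous_fst.prodMk (hψ.continuous))).mul hξ.continuous
  -- bound on the compact set
  obtain ⟨C, hC⟩ : ∃ C, ∀ p ∈ (Set.Icc (0:ℝ) t ×ˢ Metric.closedBall x₀ 1), ‖G p‖ ≤ C :=
    (isCompact_Icc.prod (isCompact_closedBall x₀ 1)).exists_bound_of_continuousOn
      hGcont.continuousOn
  -- differentiability in x of the integrand
  have hgdiff : ∀ s : ℝ, ∀ x : ℝ,
      HasDerivAt (fun y => (1 / 2) * (σ (s, y)) ^ 2 + V s (ψ s y)) (G (s, x)) x := by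
    intro s x
    have h1 : HasDerivAt (fun y => (1 / 2) * (σ (s, y)) ^ 2)
        ((1 / 2) * ((2 : ℕ) * σ (s, x) ^ 1 * fderiv ℝ σ (s, x) (0, 1))) x :=
      ((hσx s x).pow 2).const_mul (1 / 2)
    have h2 : HasDerivAt (fun y => V s (ψ s y)) (Vx s (ψ s x) * ξ (s, x)) x :=
      (hVx s (ψ s x)).comp x (hψx s x)
    have h := h1.fun_add h2
    refine h.congr_deriv ?_
    simp [hGdef]
    ring
  -- derivative of s ↦ σ(s,x) ξ(s,x)
  have hP : ∀ x : ℝ, ∀ s ∈ Set.uIcc (0:ℝ) t,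
      HasDerivAt (fun r => σ (r, x) * ξ (r, x)) (G (s, x)) s := by
    intro x s hs
    rw [Set.uIcc_of_le ht.le] at hs
    have h := (hσs s x).mul (hξs s x)
    have : fderiv ℝ σ (s, x) (1, 0) * ξ (s, x) + σ (s, x) * fderiv ℝ ξ (s, x) (1, 0)
        = G (s, x) := by
      rw [hELσ s hs x, hmix (s, x)]
      simp [hGdef]
      ring
    rwa [this] at h
  have hGint : ∀ x : ℝ, IntervalIntegrable (fun s => G (s, x)) volume 0 t :=
    fun x => (hGcont.comp (continuous_id.prodMk continuous_const)).intervalIntegrable 0 t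
  have hFTC : ∀ x : ℝ, (∫ s in (0:ℝ)..t, G (s, x))
      = σ (t, x) * ξ (t, x) - σ (0, x) * ξ (0, x) :=
    fun x => integral_eq_sub_of_hasDerivAt (hP x) (hGint x)
  -- rewrite F
  have hFeq : F = fun x => φ (ψ 0 x) + ∫ s in (0:ℝ)..t, ((1 / 2) * (σ (s, x)) ^ 2 + V s (ψ s x)) := by
    funext x
    rw [hF x]
    congr 1
    apply intervalIntegral.integral_congr
    intro s _
    dsimp only
    rw [hderiv s x]
  -- derivative of the integral term via dominated convergence
  have hint : HasDerivAt (fun x => ∫ s in (0:ℝ)..t, ((1 / 2) * (σ (s, x)) ^ 2 + V s (ψ s x)))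
      (∫ s in (0:ℝ)..t, G (s, x₀)) x₀ := by
    have hcontg : Continuous fun p : ℝ × ℝ => (1 / 2) * (σ p) ^ 2 + V p.1 (Ψ p) :=
      (continuous_const.mul ((hσ.continuous).pow 2)).add
        (hV.continuous.comp (continuous_fst.prodMk hψ.continuous))
    refine (intervalIntegral.hasDerivAt_integral_of_dominated_loc_of_deriv_le
      (F := fun x s => (1 / 2) * (σ (s, x)) ^ 2 + V s (ψ s x))
      (F' := fun x s => G (s, x)) (bound := fun _ => C) (Metric.ball_mem_nhds x₀ one_pos) ?_ ?_ ?_ ?_ ?_ ?_).2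
    · filter_upwards with x
      exact ((hcontg.comp (continuous_id.prodMk continuous_const)).aestronglyMeasurable)
    · exact (hcontg.comp (continuous_id.prodMk continuous_const)).intervalIntegrable 0 t
    · exact (hGcont.comp (continuous_id.prodMk continuous_const)).aestronglyMeasurable
    · filter_upwards with s hs x hx
      refine hC (s, x) ⟨?_, ?_⟩
      · rw [Set.uIoc_of_le ht.le] at hs
        exact ⟨hs.1.le, hs.2⟩
      · exact Metric.ball_subset_closedBall hx
    · exact intervalIntegrable_const
    · filter_upwards with s hs x hx
      exact hgdiff s x
  -- derivative of the φ term
  have hφ' : HasDerivAt (fun x => φ (ψ 0 x)) (deriv φ (ψ 0 x₀) * ξ (0, x₀)) x₀ := by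
    have h1 : HasDerivAt φ (deriv φ (ψ 0 x₀)) (ψ 0 x₀) :=
      ((hφ.differentiable (by norm_num)) (ψ 0 x₀)).hasDerivAt
    exact h1.comp x₀ (hψx 0 x₀)
  -- assemble
  have hsum := hφ'.fun_add hint
  rw [← hFeq] at hsum
  have hσ0 : σ (0, x₀) = deriv φ (ψ 0 x₀) := by
    rw [← hderiv 0 x₀]; exact hinit x₀
  have : deriv φ (ψ 0 x₀) * ξ (0, x₀) + ∫ s in (0:ℝ)..t, G (s, x₀)
      = deriv (fun r => ψ r x₀) t := by
    rw [hFTC x₀, hξt x₀, hσ0, hderiv t x₀]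
    ring
  rwa [this] at hsum
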